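/- Let (G,m) be a summable weighted graph. For A ⊆ V set R_A = (∑_{(u,v) ∈ A×A} m(u,v))/m(A) (i.e. R_A = 2·m(A,A)/m(A), where m(A,A) is the total weight of edges with both endpoints in A). Then for any partition V = A ⊔ B into nonempty sets one has min{R_A, R_B} ≤ 1 − h̄(A,B) ≤ max{R_A, R_B} ≤ κ(A,B). -/

import Mathlib

open MeasureTheory

/-- A summable weighted graph on a vertex set `V`. -/
structure SummableWeightedGraph (V : Type*) where
  m : V → V → ℝ
  symm : ∀ u v, m u v = m v u
  nonneg : ∀ u v, 0 ≤ m u v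
  loopless : ∀ v, m v v = 0
  summable : Summable fun p : V × V => m p.1 p.2
  noIsolated : ∀ v, 0 < ∑' u, m v u

namespace SummableWeightedGraph

variable {V : Type*} (G : SummableWeightedGraph V)

/-- The weight of a vertex. -/
noncomputable def deg (v : V) : ℝ := ∑' u, G.m v u

/-- The weight of a set of vertices. -/
noncomputable def setWeight (S : Set V) : ℝ := ∑' v : S, G.deg v

/-- The weight of the boundary of a set of vertices. -/
noncomputable def boundaryWeight (S : Set V) : ℝ :=
  ∑' p : ↥S × ↥Sᶜ, G.m p.1 p.2

/-- The Cheeger constant. -/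
noncomputable def cheegerConst : ℝ :=
  sInf { r : ℝ | ∃ S : Set V, S.Nonempty ∧ G.setWeight S ≤ G.setWeight Sᶜ ∧
    r = G.boundaryWeight S / G.setWeight S }

/-- The weighted counting measure on vertices. -/
noncomputable def measure [MeasurableSpace V] : Measure V :=
  Measure.sum fun v => ENNReal.ofReal (G.deg v) • Measure.dirac v

/-- The normalised Laplacian, characterised by its pointwise formula. -/
def IsLaplacian [MeasurableSpace V]
    (L : Lp ℝ 2 G.measure →L[ℝ] Lp ℝ 2 G.measure) : Prop :=
  ∀ f : Lp ℝ 2 G.measure, ∀ᵐ v ∂G.measure,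
    L f v = f v - (G.deg v)⁻¹ * ∑' u, G.m v u * f u

end SummableWeightedGraph

namespace SummableWeightedGraph

variable {V : Type*} (G : SummableWeightedGraph V)

/-- Total weight `m(A,B)` of the edges joining `A` to `B`. -/
noncomputable def pairWeight (A B : Set V) : ℝ := ∑' q : ↥A × ↥B, G.m q.1 q.2

/-- The dual Cheeger ratio of a pair of disjoint nonempty sets of vertices. -/
noncomputable def dualCheegerRatio (A B : Set V) : ℝ :=
  2 * G.pairWeight A B / (G.setWeight A + G.setWeight B)

/-- The dual Cheeger constant. -/
noncomputable def dualCheegerConst : ℝ :=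
  sSup { r : ℝ | ∃ A B : Set V, A.Nonempty ∧ B.Nonempty ∧ Disjoint A B ∧
    r = G.dualCheegerRatio A B }

end SummableWeightedGraph

namespace SummableWeightedGraph

variable {V : Type*} (G : SummableWeightedGraph V)

/-- `p_S(v)`, the probability that the random walk moves from `v` into `S` in one step. -/
noncomputable def pProb (S : Set V) (v : V) : ℝ := (∑' u : S, G.m v u) / G.deg v

/-- `κ(A,B)` for a partition `V = A ⊔ B` into nonempty sets. -/
noncomputable def kappaPair (A B : Set V) : ℝ :=
  max (⨆ v : A, G.pProb A v) (⨆ w : B, G.pProb B w)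

/-- The invariant `κ(G,m)`. -/
noncomputable def kappa : ℝ :=
  sInf { r : ℝ | ∃ A B : Set V, A.Nonempty ∧ B.Nonempty ∧ Disjoint A B ∧
    A ∪ B = Set.univ ∧ r = G.kappaPair A B }

end SummableWeightedGraph

namespace SummableWeightedGraph

variable {V : Type*} (G : SummableWeightedGraph V)

lemma summable_fiber' (v : V) : Summable fun u => G.m v u :=
  G.summable.prod_factor v

lemma summable_pair' (A B : Set V) : Summable fun q : ↥A × ↥B => G.m q.1 q.2 :=
  G.summable.comp_injective (Subtype.val_injective.prodMap Subtype.val_injective)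

lemma pairWeight_nonneg' (A B : Set V) : 0 ≤ G.pairWeight A B :=
  tsum_nonneg fun _ => G.nonneg _ _

lemma summable_deg' : Summable G.deg :=
  ((summable_prod_of_nonneg (f := fun p : V × V => G.m p.1 p.2)
    (fun _ => G.nonneg _ _)).mp G.summable).2

lemma deg_pos' (v : V) : 0 < G.deg v := G.noIsolated v

lemma setWeight_pos' {A : Set V} (hA : A.Nonempty) : 0 < G.setWeight A := by
  obtain ⟨a, ha⟩ := hA
  exact Summable.tsum_pos (G.summable_deg'.subtype A) (fun v => (G.deg_pos' v).le) ⟨a, ha⟩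
    (G.deg_pos' a)

lemma pairWeight_eq' (A B : Set V) :
    G.pairWeight A B = ∑' v : A, ∑' u : B, G.m v u :=
  Summable.tsum_prod' (G.summable_pair' A B) fun v => (G.summable_fiber' v).subtype B

lemma summable_inner' (A B : Set V) :
    Summable fun v : A => ∑' u : B, G.m v u :=
  ((summable_prod_of_nonneg (f := fun q : ↥A × ↥B => G.m q.1 q.2)
    (fun _ => G.nonneg _ _)).mp (G.summable_pair' A B)).2

lemma setWeight_split' (A : Set V) :
    G.setWeight A = G.pairWeight A A + G.pairWeight A Aᶜ := by
  have h : G.setWeight A = ∑' v : A, (∑' u : A, G.m v u + ∑' u : ↥Aᶜ, G.m v u) :=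
    tsum_congr fun v => (Summable.tsum_subtype_add_tsum_subtype_compl (G.summable_fiber' v) A).symm
  rw [h, Summable.tsum_add (G.summable_inner' A A) (G.summable_inner' A Aᶜ),
    G.pairWeight_eq' A A, G.pairWeight_eq' A Aᶜ]

lemma pairWeight_comm' (A B : Set V) : G.pairWeight A B = G.pairWeight B A :=
  calc G.pairWeight A B
      = ∑' q : ↥A × ↥B, (fun p : ↥B × ↥A => G.m p.1 p.2) ((Equiv.prodComm ↥A ↥B) q) :=
        tsum_congr fun q => G.symm q.1 q.2
    _ = G.pairWeight B A := (Equiv.prodComm ↥A ↥B).tsum_eq (fun p : ↥B × ↥A => G.m p.1 p.2)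

lemma pProb_le_one' (S : Set V) (v : V) : G.pProb S v ≤ 1 := by
  rw [pProb, div_le_one (G.deg_pos' v)]
  exact Summable.tsum_subtype_le (fun u => G.m v u) S (fun _ => G.nonneg _ _) (G.summable_fiber' v)

lemma ratio_le_sup' {A : Set V} (hA : A.Nonempty) :
    G.pairWeight A A / G.setWeight A ≤ ⨆ v : A, G.pProb A v := by
  have hAne : Nonempty ↥A := hA.to_subtype
  set c := ⨆ v : A, G.pProb A ↑v with hc
  have hbdd : BddAbove (Set.range fun v : A => G.pProb A ↑v) :=
    ⟨1, by rintro r ⟨v, rfl⟩; exact G.pProb_le_one' A v⟩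
  have hle : ∀ v : A, G.pProb A ↑v ≤ c := fun v => le_ciSup hbdd v
  rw [div_le_iff₀ (G.setWeight_pos' hA)]
  have h1 : G.pairWeight A A = ∑' v : A, G.pProb A ↑v * G.deg ↑v := by
    rw [G.pairWeight_eq' A A]
    exact tsum_congr fun v => (div_mul_cancel₀ _ (G.deg_pos' ↑v).ne').symm
  have hs1 : Summable fun v : A => G.pProb A ↑v * G.deg ↑v :=
    (G.summable_inner' A A).congr fun v =>
      (div_mul_cancel₀ _ (G.deg_pos' ↑v).ne').symm
  have h2 : ∑' v : A, G.pProb A ↑v * G.deg ↑v ≤ ∑' v : A, c * G.deg ↑v :=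
    Summable.tsum_le_tsum (fun v => mul_le_mul_of_nonneg_right (hle v) (G.deg_pos' ↑v).le)
      hs1 ((G.summable_deg'.subtype A).mul_left c)
  calc G.pairWeight A A = ∑' v : A, G.pProb A ↑v * G.deg ↑v := h1
    _ ≤ ∑' v : A, c * G.deg ↑v := h2
    _ = c * G.setWeight A := tsum_mul_left

end SummableWeightedGraph

open SummableWeightedGraph in
/-- `min{R_A, R_B} ≤ 1 - h̄(A,B) ≤ max{R_A, R_B} ≤ κ(A,B)` for any
partition `V = A ⊔ B` into nonempty sets. -/
theorem RA_RB_dualCheeger_kappa {V : Type*} [Countable V] (G : SummableWeightedGraph V)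
    (A B : Set V) (hA : A.Nonempty) (hB : B.Nonempty) (hdisj : Disjoint A B)
    (hcover : A ∪ B = Set.univ) :
    min (G.pairWeight A A / G.setWeight A) (G.pairWeight B B / G.setWeight B)
        ≤ 1 - G.dualCheegerRatio A B ∧
    1 - G.dualCheegerRatio A B
        ≤ max (G.pairWeight A A / G.setWeight A) (G.pairWeight B B / G.setWeight B) ∧
    max (G.pairWeight A A / G.setWeight A) (G.pairWeight B B / G.setWeight B)
        ≤ G.kappaPair A B := by
  have hcompl : IsCompl A B :=
    ⟨hdisj, codisjoint_iff.mpr (by simpa [Set.sup_eq_union, Set.top_eq_univ] using hcover)⟩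
  have hAc : Aᶜ = B := hcompl.compl_eq
  have hBc : Bᶜ = A := hcompl.symm.compl_eq
  set x := G.pairWeight A A with hx
  set y := G.pairWeight B B with hy
  set z := G.pairWeight A B with hz
  set a := G.setWeight A with ha'
  set b := G.setWeight B with hb'
  have hxnn : 0 ≤ x := G.pairWeight_nonneg' A A
  have hynn : 0 ≤ y := G.pairWeight_nonneg' B B
  have hznn : 0 ≤ z := G.pairWeight_nonneg' A B
  have hapos : 0 < a := G.setWeight_pos' hA
  have hbpos : 0 < b := G.setWeight_pos' hB
  have habpos : 0 < a + b := by linarith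
  have haeq : a = x + z := by rw [ha', G.setWeight_split' A, hAc]
  have hbeq : b = y + z := by
    rw [hb', G.setWeight_split' B, hBc, G.pairWeight_comm' B A]
  have hval : 1 - G.dualCheegerRatio A B = (x + y) / (a + b) := by
    rw [dualCheegerRatio, ← ha', ← hb', ← hz, eq_div_iff habpos.ne', sub_mul, one_mul,
      div_mul_cancel₀ _ habpos.ne']
    rw [haeq, hbeq]; ring
  refine ⟨?_, ?_, ?_⟩
  · rw [hval, le_div_iff₀ habpos]
    have h1 : min (x / a) (y / b) * a ≤ x := by
      calc min (x / a) (y / b) * a ≤ x / a * a :=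
            mul_le_mul_of_nonneg_right (min_le_left _ _) hapos.le
        _ = x := div_mul_cancel₀ _ hapos.ne'
    have h2 : min (x / a) (y / b) * b ≤ y := by
      calc min (x / a) (y / b) * b ≤ y / b * b :=
            mul_le_mul_of_nonneg_right (min_le_right _ _) hbpos.le
        _ = y := div_mul_cancel₀ _ hbpos.ne'
    calc min (x / a) (y / b) * (a + b)
        = min (x / a) (y / b) * a + min (x / a) (y / b) * b := mul_add _ _ _
      _ ≤ x + y := add_le_add h1 h2
  · rw [hval, div_le_iff₀ habpos]
    have h1 : x ≤ max (x / a) (y / b) * a := by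
      calc x = x / a * a := (div_mul_cancel₀ _ hapos.ne').symm
        _ ≤ max (x / a) (y / b) * a :=
            mul_le_mul_of_nonneg_right (le_max_left _ _) hapos.le
    have h2 : y ≤ max (x / a) (y / b) * b := by
      calc y = y / b * b := (div_mul_cancel₀ _ hbpos.ne').symm
        _ ≤ max (x / a) (y / b) * b :=
            mul_le_mul_of_nonneg_right (le_max_right _ _) hbpos.le
    calc x + y ≤ max (x / a) (y / b) * a + max (x / a) (y / b) * b := add_le_add h1 h2
      _ = max (x / a) (y / b) * (a + b) := (mul_add _ _ _).symm
  · rw [kappaPair]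
    exact max_le_max (G.ratio_le_sup' hA) (G.ratio_le_sup' hB)
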